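/- Let n ≥ 1, μ ∈ ℝⁿ, and Σ a positive definite symmetric real n×n matrix, and let ν = ν_{μ,Σ} be the corresponding Gaussian measure on ℝⁿ. With M(x) = −(1/2)Σ⁻¹ + (1/2)Σ⁻¹(x−μ)(x−μ)ᵀΣ⁻¹ and K = Σ⁻¹, for all indices a, b, c, d, e, f one has ∫ M(x)_{ab}·M(x)_{cd}·M(x)_{ef} dν(x) = (1/8)·(K_{ac}K_{de}K_{fb} + K_{ac}K_{df}K_{eb} + K_{ad}K_{ce}K_{fb} + K_{ad}K_{cf}K_{eb} + K_{ae}K_{fc}K_{db} + K_{ae}K_{fd}K_{cb} + K_{af}K_{ec}K_{db} + K_{af}K_{ed}K_{cb}). (This is the Amari–Chentsov component C_{ΣΣΣ} = Σ⁻¹⊗Σ⁻¹⊗Σ⁻¹ of the multivariate Gaussian family, written in symmetrized component form; it is evaluated using the fourth and sixth central moments of the multivariate Gaussian.) -/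

import Mathlib

open MeasureTheory Matrix Real

/-- The Lebesgue density of the multivariate Gaussian distribution with mean `μ` and
covariance matrix `S` on `ℝⁿ`. -/
noncomputable def mvGaussDensity {n : ℕ} (μ : Fin n → ℝ) (S : Matrix (Fin n) (Fin n) ℝ)
    (x : Fin n → ℝ) : ℝ :=
  (2 * π) ^ (-(n : ℝ) / 2) * S.det ^ (-(1 : ℝ) / 2) *
    Real.exp (-(1 / 2) * ((x - μ) ⬝ᵥ (S⁻¹ *ᵥ (x - μ))))

/-- The multivariate Gaussian measure `ν_{μ,Σ}` on `ℝⁿ`, given by its Lebesgue density. -/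
noncomputable def mvGaussMeasure {n : ℕ} (μ : Fin n → ℝ) (S : Matrix (Fin n) (Fin n) ℝ) :
    Measure (Fin n → ℝ) :=
  volume.withDensity fun x => ENNReal.ofReal (mvGaussDensity μ S x)

/-- The score of the multivariate Gaussian log-likelihood with respect to the covariance
parameter: M(x) = −(1/2)Σ⁻¹ + (1/2)Σ⁻¹(x−μ)(x−μ)ᵀΣ⁻¹. -/
noncomputable def mvScoreSigma {n : ℕ} (μ : Fin n → ℝ) (S : Matrix (Fin n) (Fin n) ℝ)
    (x : Fin n → ℝ) : Matrix (Fin n) (Fin n) ℝ :=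
  (-(1 / 2) : ℝ) • S⁻¹ + ((1 / 2) : ℝ) • (S⁻¹ * Matrix.vecMulVec (x - μ) (x - μ) * S⁻¹)

noncomputable def gphi (t : ℝ) : ℝ := (Real.sqrt (2 * π))⁻¹ * Real.exp (-(1/2) * t ^ 2)

noncomputable def gm (k : ℕ) : ℝ := ∫ t : ℝ, t ^ k * gphi t

lemma integrable_pow_mul_exp (k : ℕ) :
    Integrable (fun t : ℝ => t ^ k * Real.exp (-(1/2) * t ^ 2)) := by
  have h := integrable_rpow_mul_exp_neg_mul_sq (b := 1/2) (by norm_num) (s := (k:ℝ))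
    (by have : (0:ℝ) ≤ (k:ℝ) := Nat.cast_nonneg k; linarith)
  simpa [Real.rpow_natCast] using h

lemma integrable_pow_mul_gphi (k : ℕ) : Integrable (fun t : ℝ => t ^ k * gphi t) := by
  unfold gphi
  simpa [mul_comm, mul_assoc, mul_left_comm] using
    (integrable_pow_mul_exp k).const_mul (Real.sqrt (2 * π))⁻¹

lemma gm_zero : gm 0 = 1 := by
  unfold gm gphi
  simp only [pow_zero, one_mul]
  rw [integral_const_mul]
  rw [integral_gaussian (1/2)]
  rw [inv_mul_eq_one₀ (by positivity)]
  rw [show π / (1/2) = 2 * π by ring]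

lemma gm_rec (k : ℕ) : gm (k + 2) = (k + 1) * gm k := by
  have key : ∫ t : ℝ, ((k+1 : ℝ) * t ^ k * Real.exp (-(1/2) * t ^ 2)
      - t ^ (k+2) * Real.exp (-(1/2) * t ^ 2)) = 0 := by
    simp only [mul_assoc]
    apply integral_eq_zero_of_hasDerivAt_of_integrable
      (f := fun t : ℝ => t ^ (k+1) * Real.exp (-(1/2) * t ^ 2))
    · intro x
      have h1 : HasDerivAt (fun t : ℝ => t ^ (k+1)) ((k+1 : ℝ) * x ^ k) x := by
        simpa using hasDerivAt_pow (k+1) x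
      have h2 : HasDerivAt (fun t : ℝ => Real.exp (-(1/2) * t ^ 2))
          (Real.exp (-(1/2) * x ^ 2) * (-(1/2) * (2 * x))) x := by
        have : HasDerivAt (fun t : ℝ => -(1/2) * t ^ 2) (-(1/2) * (2 * x)) x := by
          simpa using ((hasDerivAt_pow 2 x).const_mul (-(1/2) : ℝ))
        exact this.exp
      have := h1.mul h2
      convert this using 1
      · rfl
      · rfl
      · ring
    · exact ((integrable_pow_mul_exp k).const_mul _).sub (integrable_pow_mul_exp (k+2))
    · exact integrable_pow_mul_exp (k+1)
  rw [show (fun t : ℝ => (k+1 : ℝ) * t ^ k * Real.exp (-(1/2) * t ^ 2)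
      - t ^ (k+2) * Real.exp (-(1/2) * t ^ 2))
    = fun t : ℝ => (k+1 : ℝ) * (t ^ k * Real.exp (-(1/2) * t ^ 2))
      - t ^ (k+2) * Real.exp (-(1/2) * t ^ 2) from funext fun t => by ring] at key
  rw [integral_sub ((integrable_pow_mul_exp k).const_mul ((k:ℝ)+1))
    (integrable_pow_mul_exp (k+2)), integral_const_mul, sub_eq_zero] at key
  unfold gm gphi
  have e1 : ∀ m : ℕ, (fun t : ℝ => t ^ m * ((Real.sqrt (2 * π))⁻¹ * Real.exp (-(1/2) * t ^ 2)))
      = fun t : ℝ => (Real.sqrt (2 * π))⁻¹ * (t ^ m * Real.exp (-(1/2) * t ^ 2)) :=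
    fun m => funext fun t => by ring
  rw [e1, e1, integral_const_mul, integral_const_mul, ← key]
  ring

lemma gm_one : gm 1 = 0 := by
  unfold gm gphi
  have h : ∫ t : ℝ, t ^ 1 * ((Real.sqrt (2 * π))⁻¹ * Real.exp (-(1/2) * t ^ 2))
      = ∫ t : ℝ, (-t) ^ 1 * ((Real.sqrt (2 * π))⁻¹ * Real.exp (-(1/2) * (-t) ^ 2)) :=
    (integral_neg_eq_self _ _).symm
  have h2 : ∫ t : ℝ, (-t) ^ 1 * ((Real.sqrt (2 * π))⁻¹ * Real.exp (-(1/2) * (-t) ^ 2))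
      = - ∫ t : ℝ, t ^ 1 * ((Real.sqrt (2 * π))⁻¹ * Real.exp (-(1/2) * t ^ 2)) := by
    rw [← integral_neg]
    congr 1; funext t; ring_nf
  linarith [h, h2]

lemma gm_stein (k : ℕ) : gm (k + 1) = k * gm (k - 1) := by
  cases k with
  | zero => simpa using gm_one
  | succ j => rw [show j + 1 + 1 = j + 2 from rfl, gm_rec]; push_cast; simp

lemma gm_two : gm 2 = 1 := by
  have := gm_rec 0; rw [gm_zero] at this; simpa using this

open MvPolynomial


variable {n : ℕ}

noncomputable def gw (c : Fin n →₀ ℕ) : ℝ := ∏ r, gm (c r)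

noncomputable def gE {n : ℕ} : MvPolynomial (Fin n) ℝ →ₗ[ℝ] ℝ :=
  (MvPolynomial.basisMonomials (Fin n) ℝ).constr ℝ gw

lemma gE_monomial (c : Fin n →₀ ℕ) (a : ℝ) : gE (monomial c a) = a * gw c := by
  have h : (monomial c a : MvPolynomial (Fin n) ℝ) = a • monomial c 1 := by
    rw [MvPolynomial.smul_monomial, smul_eq_mul, mul_one]
  rw [h, _root_.map_smul, smul_eq_mul]
  congr 1
  have hb : (MvPolynomial.basisMonomials (Fin n) ℝ) c = monomial c 1 := by
    rw [MvPolynomial.coe_basisMonomials]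
  rw [← hb]
  exact Module.Basis.constr_basis _ _ _ _

lemma gw_zero : gw (0 : Fin n →₀ ℕ) = 1 := by
  unfold gw; simp [gm_zero]

lemma gE_one : gE (1 : MvPolynomial (Fin n) ℝ) = 1 := by
  have : (1 : MvPolynomial (Fin n) ℝ) = monomial 0 1 := by simp
  rw [this, gE_monomial, gw_zero, mul_one]

lemma gE_C (r : ℝ) : gE (C r : MvPolynomial (Fin n) ℝ) = r := by
  have : (C r : MvPolynomial (Fin n) ℝ) = monomial 0 r := by simp
  rw [this, gE_monomial, gw_zero, mul_one]

lemma gE_C_mul (r : ℝ) (p : MvPolynomial (Fin n) ℝ) : gE (C r * p) = r * gE p := by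
  rw [← MvPolynomial.smul_eq_C_mul, _root_.map_smul, smul_eq_mul]

lemma gE_X_mul (i : Fin n) (p : MvPolynomial (Fin n) ℝ) :
    gE (X i * p) = gE (MvPolynomial.pderiv i p) := by
  induction p using MvPolynomial.induction_on' with
  | add p q hp hq => rw [mul_add, map_add, map_add, hp, hq, map_add]
  | monomial c a =>
    rw [show (X i : MvPolynomial (Fin n) ℝ) = monomial (Finsupp.single i 1) 1 from rfl]
    rw [MvPolynomial.monomial_mul, one_mul, MvPolynomial.pderiv_monomial,
      gE_monomial, gE_monomial]
    unfold gw
    rw [← Finset.mul_prod_erase Finset.univ _ (Finset.mem_univ i),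
      ← Finset.mul_prod_erase Finset.univ (fun r => gm (((c - Finsupp.single i 1) : Fin n →₀ ℕ) r)) (Finset.mem_univ i)]
    have h1 : ((Finsupp.single i 1 + c : Fin n →₀ ℕ)) i = c i + 1 := by simp [add_comm]
    have h2 : ((c - Finsupp.single i 1 : Fin n →₀ ℕ)) i = c i - 1 := by simp
    have h3 : ∀ r ∈ Finset.univ.erase i, gm ((Finsupp.single i 1 + c : Fin n →₀ ℕ) r) = gm (c r) := by
      intro r hr
      rw [Finsupp.add_apply, Finsupp.single_eq_of_ne' (Finset.ne_of_mem_erase hr).symm, zero_add]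
    have h4 : ∀ r ∈ Finset.univ.erase i, gm ((c - Finsupp.single i 1 : Fin n →₀ ℕ) r) = gm (c r) := by
      intro r hr
      rw [Finsupp.tsub_apply, Finsupp.single_eq_of_ne' (Finset.ne_of_mem_erase hr).symm, Nat.sub_zero]
    rw [Finset.prod_congr rfl h3, Finset.prod_congr rfl h4, h1, h2, gm_stein (c i)]
    push_cast
    ring

noncomputable def Lf {n : ℕ} (v : Fin n → ℝ) : MvPolynomial (Fin n) ℝ := ∑ i, C (v i) * X i

lemma pderiv_Lf (i : Fin n) (w : Fin n → ℝ) : MvPolynomial.pderiv i (Lf w) = C (w i) := by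
  unfold Lf
  rw [map_sum]
  rw [Finset.sum_eq_single i]
  · simp [MvPolynomial.pderiv_mul]
  · intro j _ hj
    simp only [MvPolynomial.pderiv_mul, MvPolynomial.pderiv_C, MvPolynomial.pderiv_X_of_ne hj,
      zero_mul, mul_zero, add_zero, zero_add]
  · simp

lemma gE_Lf_mul (v : Fin n → ℝ) (p : MvPolynomial (Fin n) ℝ) :
    gE (Lf v * p) = ∑ i, v i * gE (MvPolynomial.pderiv i p) := by
  unfold Lf
  rw [Finset.sum_mul, map_sum]
  congr 1; funext i
  rw [mul_assoc, gE_C_mul, gE_X_mul]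

lemma gE_E2 (v w : Fin n → ℝ) : gE (Lf v * Lf w) = v ⬝ᵥ w := by
  rw [gE_Lf_mul]
  simp only [pderiv_Lf, gE_C]
  rfl

lemma gE_E4 (v₁ v₂ v₃ v₄ : Fin n → ℝ) :
    gE (Lf v₁ * (Lf v₂ * (Lf v₃ * Lf v₄)))
      = v₁ ⬝ᵥ v₂ * (v₃ ⬝ᵥ v₄) + v₁ ⬝ᵥ v₃ * (v₂ ⬝ᵥ v₄) + v₁ ⬝ᵥ v₄ * (v₂ ⬝ᵥ v₃) := by
  rw [gE_Lf_mul]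
  have hd : ∀ i, MvPolynomial.pderiv i (Lf v₂ * (Lf v₃ * Lf v₄))
      = C (v₂ i) * (Lf v₃ * Lf v₄) + C (v₃ i) * (Lf v₂ * Lf v₄) + C (v₄ i) * (Lf v₂ * Lf v₃) := by
    intro i
    simp only [MvPolynomial.pderiv_mul, pderiv_Lf]
    ring
  simp only [hd, map_add, gE_C_mul, gE_E2]
  simp only [mul_add, Finset.sum_add_distrib, ← Finset.sum_mul]
  simp only [← mul_assoc, ← Finset.sum_mul]
  rfl

lemma gE_E6 (v₁ v₂ v₃ v₄ v₅ v₆ : Fin n → ℝ) :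
    gE (Lf v₁ * (Lf v₂ * (Lf v₃ * (Lf v₄ * (Lf v₅ * Lf v₆)))))
      = v₁ ⬝ᵥ v₂ * (v₃ ⬝ᵥ v₄ * (v₅ ⬝ᵥ v₆) + v₃ ⬝ᵥ v₅ * (v₄ ⬝ᵥ v₆) + v₃ ⬝ᵥ v₆ * (v₄ ⬝ᵥ v₅))
      + v₁ ⬝ᵥ v₃ * (v₂ ⬝ᵥ v₄ * (v₅ ⬝ᵥ v₆) + v₂ ⬝ᵥ v₅ * (v₄ ⬝ᵥ v₆) + v₂ ⬝ᵥ v₆ * (v₄ ⬝ᵥ v₅))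
      + v₁ ⬝ᵥ v₄ * (v₂ ⬝ᵥ v₃ * (v₅ ⬝ᵥ v₆) + v₂ ⬝ᵥ v₅ * (v₃ ⬝ᵥ v₆) + v₂ ⬝ᵥ v₆ * (v₃ ⬝ᵥ v₅))
      + v₁ ⬝ᵥ v₅ * (v₂ ⬝ᵥ v₃ * (v₄ ⬝ᵥ v₆) + v₂ ⬝ᵥ v₄ * (v₃ ⬝ᵥ v₆) + v₂ ⬝ᵥ v₆ * (v₃ ⬝ᵥ v₄))
      + v₁ ⬝ᵥ v₆ * (v₂ ⬝ᵥ v₃ * (v₄ ⬝ᵥ v₅) + v₂ ⬝ᵥ v₄ * (v₃ ⬝ᵥ v₅) + v₂ ⬝ᵥ v₅ * (v₃ ⬝ᵥ v₄)) := by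
  rw [gE_Lf_mul]
  have hd : ∀ i, MvPolynomial.pderiv i (Lf v₂ * (Lf v₃ * (Lf v₄ * (Lf v₅ * Lf v₆))))
      = C (v₂ i) * (Lf v₃ * (Lf v₄ * (Lf v₅ * Lf v₆)))
      + C (v₃ i) * (Lf v₂ * (Lf v₄ * (Lf v₅ * Lf v₆)))
      + C (v₄ i) * (Lf v₂ * (Lf v₃ * (Lf v₅ * Lf v₆)))
      + C (v₅ i) * (Lf v₂ * (Lf v₃ * (Lf v₄ * Lf v₆)))
      + C (v₆ i) * (Lf v₂ * (Lf v₃ * (Lf v₄ * Lf v₅))) := by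
    intro i
    simp only [MvPolynomial.pderiv_mul, pderiv_Lf]
    ring
  simp only [hd, map_add, gE_C_mul, gE_E4]
  simp only [mul_add, Finset.sum_add_distrib]
  simp only [← mul_assoc, ← Finset.sum_mul]
  have hdp : ∀ v w : Fin n → ℝ, ∑ i, v i * w i = v ⬝ᵥ w := fun _ _ => rfl
  simp only [hdp]


lemma integral_gphi_monomial (c : Fin n →₀ ℕ) (a : ℝ) :
    ∫ u : Fin n → ℝ, (∏ r, gphi (u r)) * MvPolynomial.eval u (monomial c a) = a * gw c := by
  have he : ∀ u : Fin n → ℝ, (∏ r, gphi (u r)) * MvPolynomial.eval u (monomial c a)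
      = a * ∏ r, (u r ^ c r * gphi (u r)) := by
    intro u
    rw [MvPolynomial.eval_monomial, Finsupp.prod_fintype _ _ (fun i => pow_zero (u i)),
      Finset.prod_mul_distrib]
    ring
  simp only [he]
  rw [integral_const_mul, MeasureTheory.integral_fintype_prod_volume_eq_prod (ι := Fin n)
    (f := fun r t => t ^ c r * gphi t)]
  unfold gw gm
  rfl

lemma integrable_gphi_monomial (c : Fin n →₀ ℕ) (a : ℝ) :
    Integrable (fun u : Fin n → ℝ => (∏ r, gphi (u r)) * MvPolynomial.eval u (monomial c a)) := by
  have he : (fun u : Fin n → ℝ => (∏ r, gphi (u r)) * MvPolynomial.eval u (monomial c a))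
      = fun u : Fin n → ℝ => a * ∏ r, (u r ^ c r * gphi (u r)) := by
    funext u
    rw [MvPolynomial.eval_monomial, Finsupp.prod_fintype _ _ (fun i => pow_zero (u i)),
      Finset.prod_mul_distrib]
    ring
  rw [he]
  exact (MeasureTheory.Integrable.fintype_prod (f := fun r t => t ^ c r * gphi t)
    (fun r => integrable_pow_mul_gphi (c r))).const_mul a

lemma integrable_gphi_poly (p : MvPolynomial (Fin n) ℝ) :
    Integrable (fun u : Fin n → ℝ => (∏ r, gphi (u r)) * MvPolynomial.eval u p) := by
  have he : (fun u : Fin n → ℝ => (∏ r, gphi (u r)) * MvPolynomial.eval u p)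
      = fun u => ∑ v ∈ p.support, (∏ r, gphi (u r)) * MvPolynomial.eval u (monomial v (coeff v p)) := by
    funext u
    rw [← Finset.mul_sum]
    congr 1
    conv_lhs => rw [p.as_sum]
    rw [map_sum]
  rw [he]
  exact MeasureTheory.integrable_finset_sum _ (fun v _ => integrable_gphi_monomial v (coeff v p))

lemma integral_gphi_eval (p : MvPolynomial (Fin n) ℝ) :
    ∫ u : Fin n → ℝ, (∏ r, gphi (u r)) * MvPolynomial.eval u p = gE p := by
  have he : (fun u : Fin n → ℝ => (∏ r, gphi (u r)) * MvPolynomial.eval u p)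
      = fun u => ∑ v ∈ p.support, (∏ r, gphi (u r)) * MvPolynomial.eval u (monomial v (coeff v p)) := by
    funext u
    rw [← Finset.mul_sum]
    congr 1
    conv_lhs => rw [p.as_sum]
    rw [map_sum]
  rw [he, MeasureTheory.integral_finset_sum _ (fun v _ => integrable_gphi_monomial v (coeff v p))]
  simp only [integral_gphi_monomial]
  conv_rhs => rw [p.as_sum, map_sum]
  simp only [gE_monomial]


open scoped MatrixOrder

variable {n : ℕ} {μ : Fin n → ℝ} {S : Matrix (Fin n) (Fin n) ℝ}

lemma continuous_mvGaussDensity : Continuous (mvGaussDensity μ S) := by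
  unfold mvGaussDensity
  refine continuous_const.mul (Real.continuous_exp.comp ?_)
  refine continuous_const.mul ?_
  unfold dotProduct mulVec
  refine continuous_finset_sum _ fun i _ => ?_
  refine Continuous.mul (by fun_prop) ?_
  unfold dotProduct
  exact continuous_finset_sum _ fun j _ => continuous_const.mul (by fun_prop)

lemma mvGaussDensity_nonneg (hdet : 0 < S.det) (x : Fin n → ℝ) :
    0 ≤ mvGaussDensity μ S x := by
  unfold mvGaussDensity
  have h2π : (0:ℝ) < 2 * π := by positivity
  positivity

lemma integral_mvGauss_eq (hS : S.PosDef) (g : (Fin n → ℝ) → ℝ) (hg : Continuous g) :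
    ∫ x, g x ∂(mvGaussMeasure μ S)
      = ∫ u : Fin n → ℝ, (∏ r, gphi (u r)) * g (μ + CFC.sqrt S *ᵥ u) := by
  set A := CFC.sqrt S with hA
  have hPSD : A.PosSemidef := (CFC.sqrt_nonneg S).posSemidef
  have hAA : A * A = S := CFC.sqrt_mul_sqrt_self S hS.posSemidef.nonneg
  have hAT : Aᵀ = A := by
    have := hPSD.1
    rwa [Matrix.IsHermitian, conjTranspose_eq_transpose_of_trivial] at this
  have hdetS : 0 < S.det := hS.det_pos
  have hdetA2 : A.det * A.det = S.det := by rw [← det_mul, hAA]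
  have hdetA_nonneg : 0 ≤ A.det := by
    have hR : CFC.sqrt A * CFC.sqrt A = A := CFC.sqrt_mul_sqrt_self A hPSD.nonneg
    have : A.det = (CFC.sqrt A).det * (CFC.sqrt A).det := by rw [← det_mul, hR]
    rw [this]; exact mul_self_nonneg _
  have hdetA : A.det ≠ 0 := by
    intro h; rw [h, mul_zero] at hdetA2; exact hdetS.ne hdetA2
  have hAunit : IsUnit A.det := Ne.isUnit hdetA
  -- step 1: withDensity
  have step1 : ∫ x, g x ∂(mvGaussMeasure μ S)
      = ∫ x, mvGaussDensity μ S x * g x := by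
    unfold mvGaussMeasure
    have hm : Measurable fun x => (mvGaussDensity μ S x).toNNReal :=
      (continuous_mvGaussDensity.measurable).real_toNNReal
    rw [show (fun x => ENNReal.ofReal (mvGaussDensity μ S x))
        = fun x => ((mvGaussDensity μ S x).toNNReal : ENNReal) from rfl]
    rw [integral_withDensity_eq_integral_smul hm]
    congr 1; funext x
    rw [NNReal.smul_def, Real.coe_toNNReal _ (mvGaussDensity_nonneg hdetS x), smul_eq_mul]
  -- step 2: translate
  have step2 : ∫ x, mvGaussDensity μ S x * g x
      = ∫ z, mvGaussDensity μ S (μ + z) * g (μ + z) := by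
    exact (integral_add_left_eq_self μ (f := fun z => mvGaussDensity μ S z * g z)).symm
  -- step 3: linear map
  have step3 : ∫ z, mvGaussDensity μ S (μ + z) * g (μ + z)
      = |A.det| * ∫ u, mvGaussDensity μ S (μ + A *ᵥ u) * g (μ + A *ᵥ u) := by
    have hmap := Real.map_matrix_volume_pi_eq_smul_volume_pi (M := A) hdetA
    have hint : ∀ u : Fin n → ℝ, Matrix.toLin' A u = A *ᵥ u := fun u => rfl
    have hcont : Continuous fun z => mvGaussDensity μ S (μ + z) * g (μ + z) := by
      refine Continuous.mul ?_ ?_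
      · exact continuous_mvGaussDensity.comp (by fun_prop)
      · exact hg.comp (by fun_prop)
    have e1 : ∫ u, mvGaussDensity μ S (μ + A *ᵥ u) * g (μ + A *ᵥ u)
        = ∫ z, mvGaussDensity μ S (μ + z) * g (μ + z) ∂(Measure.map (⇑(Matrix.toLin' A)) volume) := by
      rw [MeasureTheory.integral_map (Continuous.aemeasurable
        (by exact LinearMap.continuous_on_pi _)) (hcont.aestronglyMeasurable)]
      rfl
    rw [e1, hmap, integral_smul_measure, ENNReal.toReal_ofReal (by positivity), smul_eq_mul,
      ← mul_assoc, ← abs_mul, mul_inv_cancel₀ hdetA, abs_one, one_mul]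
  -- step 4: density simplification
  have h2π : (0:ℝ) < 2 * π := by positivity
  have hdetA_eq : A.det = Real.sqrt S.det := by
    rw [← hdetA2, Real.sqrt_mul_self hdetA_nonneg]
  have key : ∀ u : Fin n → ℝ, |A.det| * mvGaussDensity μ S (μ + A *ᵥ u) = ∏ r, gphi (u r) := by
    intro u
    unfold mvGaussDensity
    have hsub : μ + A *ᵥ u - μ = A *ᵥ u := add_sub_cancel_left μ _
    rw [hsub]
    have hSinv : S⁻¹ = A⁻¹ * A⁻¹ := by rw [← hAA, Matrix.mul_inv_rev]
    have hquad : (A *ᵥ u) ⬝ᵥ (S⁻¹ *ᵥ (A *ᵥ u)) = u ⬝ᵥ u := by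
      rw [hSinv, Matrix.mulVec_mulVec, Matrix.mul_assoc, Matrix.nonsing_inv_mul A hAunit,
        Matrix.mul_one]
      rw [Matrix.dotProduct_mulVec]
      have hvm : Matrix.vecMul (A *ᵥ u) A⁻¹ = u := by
        rw [← Matrix.vecMul_transpose, Matrix.vecMul_vecMul, hAT,
          Matrix.mul_nonsing_inv A hAunit, Matrix.vecMul_one]
      rw [hvm]
    rw [hquad]
    have hconst : |A.det| * ((2 * π) ^ (-(n : ℝ) / 2) * S.det ^ (-(1 : ℝ) / 2))
        = (2 * π) ^ (-(n : ℝ) / 2) := by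
      rw [abs_of_nonneg hdetA_nonneg, hdetA_eq]
      rw [show (-(1:ℝ)/2) = -(1/2 : ℝ) by norm_num, Real.rpow_neg hdetS.le,
        ← Real.sqrt_eq_rpow]
      field_simp
    rw [← mul_assoc, hconst]
    have hprod : ∏ r, gphi (u r)
        = ((Real.sqrt (2 * π))⁻¹) ^ n * Real.exp (-(1/2) * (u ⬝ᵥ u)) := by
      unfold gphi
      rw [Finset.prod_mul_distrib, Finset.prod_const, Finset.card_univ, Fintype.card_fin,
        ← Real.exp_sum]
      congr 1
      congr 1
      rw [dotProduct, Finset.mul_sum]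
      exact Finset.sum_congr rfl fun r _ => by ring
    rw [hprod]
    congr 1
    rw [show (-(n:ℝ)/2) = (-(1/2:ℝ)) * (n:ℝ) by ring, Real.rpow_mul h2π.le,
      Real.rpow_natCast]
    congr 1
    rw [show (-(1/2:ℝ)) = -(1/2 : ℝ) from rfl, Real.rpow_neg h2π.le, ← Real.sqrt_eq_rpow]
  rw [step1, step2, step3, ← integral_const_mul]
  congr 1; funext u
  rw [← mul_assoc, key u]


lemma eval_Lf {n : ℕ} (u : Fin n → ℝ) (v : Fin n → ℝ) :
    MvPolynomial.eval u (Lf v) = ∑ i, v i * u i := by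
  unfold Lf
  rw [map_sum]
  simp


lemma score_entry {n : ℕ} (μ : Fin n → ℝ) (S : Matrix (Fin n) (Fin n) ℝ) (x : Fin n → ℝ)
    (p q : Fin n) : mvScoreSigma μ S x p q
      = (1/2) * ((∑ i, S⁻¹ p i * (x - μ) i) * (∑ j, (x - μ) j * S⁻¹ j q) - S⁻¹ p q) := by
  unfold mvScoreSigma
  simp only [Matrix.add_apply, Matrix.smul_apply, smul_eq_mul]
  have hm : (S⁻¹ * Matrix.vecMulVec (x - μ) (x - μ) * S⁻¹) p q
      = (∑ i, S⁻¹ p i * (x - μ) i) * (∑ j, (x - μ) j * S⁻¹ j q) := by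
    rw [Matrix.mul_apply, Finset.sum_mul_sum]
    rw [Finset.sum_comm]
    refine Finset.sum_congr rfl fun j _ => ?_
    rw [Matrix.mul_apply, Finset.sum_mul]
    refine Finset.sum_congr rfl fun i _ => ?_
    rw [Matrix.vecMulVec_apply]
    ring
  rw [hm]
  ring


/-- The Amari–Chentsov component C_{ΣΣΣ} = Σ⁻¹⊗Σ⁻¹⊗Σ⁻¹ of the multivariate Gaussian family in
symmetrized component form: with K = Σ⁻¹,
∫ M_{ab} M_{cd} M_{ef} dν = (1/8)(K_{ac}K_{de}K_{fb} + K_{ac}K_{df}K_{eb} + K_{ad}K_{ce}K_{fb}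
+ K_{ad}K_{cf}K_{eb} + K_{ae}K_{fc}K_{db} + K_{ae}K_{fd}K_{cb} + K_{af}K_{ec}K_{db}
+ K_{af}K_{ed}K_{cb}). -/
theorem mvGaussian_AC_Sigma_Sigma_Sigma (n : ℕ) (hn : 1 ≤ n) (μ : Fin n → ℝ)
    (S : Matrix (Fin n) (Fin n) ℝ) (hS : S.PosDef) (hSsymm : S.IsSymm)
    (a b c d e f : Fin n) :
    ∫ x, mvScoreSigma μ S x a b * mvScoreSigma μ S x c d * mvScoreSigma μ S x e f
        ∂(mvGaussMeasure μ S) =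
      (1 / 8) *
        (S⁻¹ a c * S⁻¹ d e * S⁻¹ f b + S⁻¹ a c * S⁻¹ d f * S⁻¹ e b
          + S⁻¹ a d * S⁻¹ c e * S⁻¹ f b + S⁻¹ a d * S⁻¹ c f * S⁻¹ e b
          + S⁻¹ a e * S⁻¹ f c * S⁻¹ d b + S⁻¹ a e * S⁻¹ f d * S⁻¹ c b
          + S⁻¹ a f * S⁻¹ e c * S⁻¹ d b + S⁻¹ a f * S⁻¹ e d * S⁻¹ c b) := by
  classical
  set A := CFC.sqrt S with hA
  have hPSD : A.PosSemidef := (CFC.sqrt_nonneg S).posSemidef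
  have hAA : A * A = S := CFC.sqrt_mul_sqrt_self S hS.posSemidef.nonneg
  have hAT : Aᵀ = A := by
    have := hPSD.1
    rwa [Matrix.IsHermitian, conjTranspose_eq_transpose_of_trivial] at this
  have hdetS : 0 < S.det := hS.det_pos
  have hdetA2 : A.det * A.det = S.det := by rw [← det_mul, hAA]
  have hdetA : A.det ≠ 0 := by
    intro h; rw [h, mul_zero] at hdetA2; exact hdetS.ne hdetA2
  have hAunit : IsUnit A.det := Ne.isUnit hdetA
  have hSinv : S⁻¹ = A⁻¹ * A⁻¹ := by rw [← hAA, Matrix.mul_inv_rev]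
  have hSinvT : (S⁻¹)ᵀ = S⁻¹ := by
    rw [Matrix.transpose_nonsing_inv, hSsymm.eq]
  have hsym : ∀ x y : Fin n, S⁻¹ x y = S⁻¹ y x := by
    intro x y
    conv_lhs => rw [← hSinvT]
    rw [Matrix.transpose_apply]
  have hscont : ∀ p q : Fin n, Continuous fun x : Fin n → ℝ => mvScoreSigma μ S x p q := by
    intro p q
    simp only [score_entry]
    have h1 : Continuous fun x : Fin n → ℝ => ∑ i, S⁻¹ p i * (x - μ) i :=
      continuous_finset_sum _ fun i _ => continuous_const.mul (by fun_prop)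
    have h2 : Continuous fun x : Fin n → ℝ => ∑ j, (x - μ) j * S⁻¹ j q :=
      continuous_finset_sum _ fun j _ => Continuous.mul (by fun_prop) continuous_const
    exact continuous_const.mul ((h1.mul h2).sub continuous_const)
  have hg : Continuous fun x : Fin n → ℝ =>
      mvScoreSigma μ S x a b * mvScoreSigma μ S x c d * mvScoreSigma μ S x e f :=
    ((hscont a b).mul (hscont c d)).mul (hscont e f)
  rw [integral_mvGauss_eq hS _ hg]
  -- the coordinates of A⁻¹ as linear-form coefficient vectors
  set w : Fin n → Fin n → ℝ := fun p i => A⁻¹ p i with hw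
  have hSAvec : ∀ u : Fin n → ℝ, S⁻¹ *ᵥ (A *ᵥ u) = A⁻¹ *ᵥ u := by
    intro u
    rw [Matrix.mulVec_mulVec, hSinv, Matrix.mul_assoc, Matrix.nonsing_inv_mul A hAunit,
      Matrix.mul_one]
  have hscore : ∀ (u : Fin n → ℝ) (p q : Fin n),
      mvScoreSigma μ S (μ + A *ᵥ u) p q
        = (1/2) * ((A⁻¹ *ᵥ u) p * (A⁻¹ *ᵥ u) q - S⁻¹ p q) := by
    intro u p q
    rw [score_entry]
    have hsub : μ + A *ᵥ u - μ = A *ᵥ u := add_sub_cancel_left μ _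
    rw [hsub]
    have h1 : ∑ i, S⁻¹ p i * (A *ᵥ u) i = (A⁻¹ *ᵥ u) p := by
      rw [← hSAvec u]; rfl
    have h2 : ∑ j, (A *ᵥ u) j * S⁻¹ j q = (A⁻¹ *ᵥ u) q := by
      have : ∑ j, (A *ᵥ u) j * S⁻¹ j q = ∑ j, S⁻¹ q j * (A *ᵥ u) j := by
        refine Finset.sum_congr rfl fun j _ => ?_
        rw [hsym j q]; ring
      rw [this, ← hSAvec u]; rfl
    rw [h1, h2]
  -- the polynomial
  set Pab : MvPolynomial (Fin n) ℝ := Lf (w a) * Lf (w b) - C (S⁻¹ a b) with hPab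
  set Pcd : MvPolynomial (Fin n) ℝ := Lf (w c) * Lf (w d) - C (S⁻¹ c d) with hPcd
  set Pef : MvPolynomial (Fin n) ℝ := Lf (w e) * Lf (w f) - C (S⁻¹ e f) with hPef
  set P : MvPolynomial (Fin n) ℝ := C (8⁻¹ : ℝ) * (Pab * (Pcd * Pef)) with hP
  have hmv : ∀ (u : Fin n → ℝ) (p : Fin n), (A⁻¹ *ᵥ u) p = MvPolynomial.eval u (Lf (w p)) := by
    intro u p
    rw [eval_Lf]
    rfl
  have hpt : ∀ u : Fin n → ℝ,
      mvScoreSigma μ S (μ + A *ᵥ u) a b * mvScoreSigma μ S (μ + A *ᵥ u) c d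
        * mvScoreSigma μ S (μ + A *ᵥ u) e f = MvPolynomial.eval u P := by
    intro u
    rw [hscore u a b, hscore u c d, hscore u e f, hP, hPab, hPcd, hPef]
    simp only [_root_.map_mul, _root_.map_sub, MvPolynomial.eval_C, ← hmv u]
    ring
  have hfun : (fun u : Fin n → ℝ => (∏ r, gphi (u r)) * (mvScoreSigma μ S (μ + A *ᵥ u) a b
      * mvScoreSigma μ S (μ + A *ᵥ u) c d * mvScoreSigma μ S (μ + A *ᵥ u) e f))
      = fun u : Fin n → ℝ => (∏ r, gphi (u r)) * MvPolynomial.eval u P := by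
    funext u; rw [hpt u]
  rw [hfun, integral_gphi_eval]
  -- dot products of the rows of A⁻¹
  have hdot : ∀ x y : Fin n, w x ⬝ᵥ w y = S⁻¹ x y := by
    intro x y
    have h1 : w x ⬝ᵥ w y = (A⁻¹ * (A⁻¹)ᵀ) x y := by
      rw [Matrix.mul_apply]
      refine Finset.sum_congr rfl fun i _ => ?_
      rw [Matrix.transpose_apply]
    rw [h1, Matrix.transpose_nonsing_inv, hAT, ← hSinv]
  -- expand the product
  have hexp : Pab * (Pcd * Pef)
      = Lf (w a) * (Lf (w b) * (Lf (w c) * (Lf (w d) * (Lf (w e) * Lf (w f)))))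
      - C (S⁻¹ e f) * (Lf (w a) * (Lf (w b) * (Lf (w c) * Lf (w d))))
      - C (S⁻¹ c d) * (Lf (w a) * (Lf (w b) * (Lf (w e) * Lf (w f))))
      - C (S⁻¹ a b) * (Lf (w c) * (Lf (w d) * (Lf (w e) * Lf (w f))))
      + C (S⁻¹ c d) * (C (S⁻¹ e f) * (Lf (w a) * Lf (w b)))
      + C (S⁻¹ a b) * (C (S⁻¹ e f) * (Lf (w c) * Lf (w d)))
      + C (S⁻¹ a b) * (C (S⁻¹ c d) * (Lf (w e) * Lf (w f)))
      - C (S⁻¹ a b) * (C (S⁻¹ c d) * C (S⁻¹ e f)) := by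
    rw [hPab, hPcd, hPef]; ring
  rw [hP, gE_C_mul, hexp]
  simp only [_root_.map_sub, _root_.map_add, gE_C_mul, gE_C]
  rw [gE_E6, gE_E4, gE_E4, gE_E4, gE_E2, gE_E2, gE_E2]
  simp only [hdot]
  rw [hsym f b, hsym e b, hsym f c, hsym d b, hsym c b, hsym e c, hsym e d, hsym f d]
  ring
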